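/- Gram-type integral identity and Hölder convexity inequality. Let x₁,…,x_n ∈ ℝ^d. Then: (i) for all β, a₁,…,a_n > 0, Σ_{1≤i,j≤n} ⟨x_i, x_j⟩/(a_i + a_j)^β = (1/Γ(β)) ∫₀^∞ |Σ_{i=1}^n e^{−a_i t} x_i|₂² t^{β−1} dt ≥ 0; (ii) for every λ = (λ₁,…,λ_n) with λ_i ∈ [0,1] and Σλ_i = 1, and every 0 < a ≤ 1, Σ_{1≤i,j≤n} λ_iλ_j |x_i − x_j|₂^{2a} ≤ Σ_{1≤i,j≤n} λ_iλ_j (|x_i|₂² + |x_j|₂²)^a ≤ 2 Σ_{i=1}^n λ_i |x_i|₂^{2a}. -/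

import Mathlib

set_option autoImplicit false
set_option maxHeartbeats 1000000

open scoped RealInnerProductSpace
open MeasureTheory Real Set

section auxlemmas

lemma norm_sq_sum_smul {n : ℕ} {E : Type*} [NormedAddCommGroup E] [InnerProductSpace ℝ E]
    (f : Fin n → ℝ) (x : Fin n → E) :
    ‖∑ i, f i • x i‖ ^ 2 = ∑ i, ∑ j, f i * f j * ⟪x i, x j⟫ := by
  rw [← real_inner_self_eq_norm_sq, sum_inner]
  refine Finset.sum_congr rfl fun i _ => ?_
  rw [inner_sum]
  refine Finset.sum_congr rfl fun j _ => ?_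
  rw [real_inner_smul_left, real_inner_smul_right]; ring

lemma integral_exp_neg_mul_rpowβ {β c : ℝ} (hβ : 0 < β) (hc : 0 < c) :
    ∫ t in Ioi (0:ℝ), Real.exp (-(c*t)) * t ^ (β-1) = Real.Gamma β / c ^ β := by
  have h := integral_rpow_mul_exp_neg_mul_rpow (p := 1) (q := β - 1) (b := c)
    one_pos (by linarith) hc
  have h2 : ∫ x in Ioi (0:ℝ), x ^ (β-1) * Real.exp (-c * x ^ (1:ℝ))
      = ∫ t in Ioi (0:ℝ), Real.exp (-(c*t)) * t ^ (β-1) := by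
    refine setIntegral_congr_fun measurableSet_Ioi fun t ht => ?_
    rw [Real.rpow_one, neg_mul, mul_comm]
  rw [h2] at h
  rw [h, show (-(β-1+1)/1 : ℝ) = -β by ring, show ((β-1+1)/1 : ℝ) = β by ring,
    Real.rpow_neg hc.le]
  ring

lemma integrableOn_exp_neg_mul_rpowβ {β c : ℝ} (hβ : 0 < β) (hc : 0 < c) :
    IntegrableOn (fun t => Real.exp (-(c*t)) * t ^ (β-1)) (Ioi (0:ℝ)) := by
  have h := integrableOn_rpow_mul_exp_neg_mul_rpow (s := β-1) (p := 1) (b := c)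
    (by linarith) one_pos hc
  refine h.congr_fun (fun t ht => ?_) measurableSet_Ioi
  beta_reduce
  rw [Real.rpow_one, neg_mul, mul_comm]

lemma integrableOn_one_sub_exp {a : ℝ} (ha : 0 < a) (ha1 : a < 1) {c : ℝ} (hc : 0 ≤ c) :
    IntegrableOn (fun t : ℝ => (1 - Real.exp (-(c*t))) * t ^ (-a-1)) (Ioi (0:ℝ)) := by
  have hmeas : AEStronglyMeasurable (fun t : ℝ => (1 - Real.exp (-(c*t))) * t ^ (-a-1))
      (volume.restrict (Ioi (0:ℝ))) := by
    apply Measurable.aestronglyMeasurable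
    exact (measurable_const.sub ((measurable_id.const_mul c).neg.exp)).mul
      (measurable_id.pow_const _)
  rw [← Ioc_union_Ioi_eq_Ioi (zero_le_one (α := ℝ))]
  apply IntegrableOn.union
  · have hg : IntegrableOn (fun t : ℝ => c * t ^ (-a)) (Ioc (0:ℝ) 1) := by
      have h := intervalIntegral.intervalIntegrable_rpow' (a := (0:ℝ)) (b := 1)
        (by linarith : (-1:ℝ) < -a)
      rw [intervalIntegrable_iff_integrableOn_Ioc_of_le zero_le_one] at h
      exact h.const_mul c
    refine Integrable.mono' hg (hmeas.mono_measure (Measure.restrict_mono Ioc_subset_Ioi_self le_rfl)) ?_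
    filter_upwards [ae_restrict_mem measurableSet_Ioc] with t ht
    have ht0 : 0 < t := ht.1
    have h1 : 0 ≤ 1 - Real.exp (-(c*t)) := by
      have : Real.exp (-(c*t)) ≤ 1 := Real.exp_le_one_iff.mpr (by nlinarith)
      linarith
    have h2 : 1 - Real.exp (-(c*t)) ≤ c * t := by
      have := Real.add_one_le_exp (-(c*t)); linarith
    have h3 : t ^ (-a) = t * t ^ (-a-1) := by
      have h4 := Real.rpow_add ht0 1 (-a-1)
      rw [Real.rpow_one] at h4
      rw [← h4]; norm_num
    rw [Real.norm_eq_abs, abs_of_nonneg (mul_nonneg h1 (Real.rpow_nonneg ht0.le _))]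
    calc (1 - Real.exp (-(c*t))) * t ^ (-a-1) ≤ (c*t) * t ^ (-a-1) :=
          mul_le_mul_of_nonneg_right h2 (Real.rpow_nonneg ht0.le _)
      _ = c * t ^ (-a) := by rw [h3]; ring
  · have hg : IntegrableOn (fun t : ℝ => t ^ (-a-1)) (Ioi (1:ℝ)) :=
      integrableOn_Ioi_rpow_of_lt (by linarith) one_pos
    refine Integrable.mono' hg (hmeas.mono_measure (Measure.restrict_mono (Ioi_subset_Ioi zero_le_one) le_rfl)) ?_
    filter_upwards [ae_restrict_mem measurableSet_Ioi] with t ht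
    have ht0 : (0:ℝ) < t := lt_trans one_pos ht
    have h1 : 0 ≤ 1 - Real.exp (-(c*t)) := by
      have : Real.exp (-(c*t)) ≤ 1 := Real.exp_le_one_iff.mpr (by nlinarith)
      linarith
    have h2 : 1 - Real.exp (-(c*t)) ≤ 1 := by
      have := Real.exp_pos (-(c*t)); linarith
    rw [Real.norm_eq_abs, abs_of_nonneg (mul_nonneg h1 (Real.rpow_nonneg ht0.le _))]
    calc (1 - Real.exp (-(c*t))) * t ^ (-a-1) ≤ 1 * t ^ (-a-1) :=
          mul_le_mul_of_nonneg_right h2 (Real.rpow_nonneg ht0.le _)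
      _ = t ^ (-a-1) := one_mul _

lemma integral_one_sub_exp_scale {a : ℝ} (ha : 0 < a) (ha1 : a < 1) {c : ℝ} (hc : 0 < c) :
    ∫ t in Ioi (0:ℝ), (1 - Real.exp (-(c*t))) * t ^ (-a-1)
      = c ^ a * ∫ t in Ioi (0:ℝ), (1 - Real.exp (-t)) * t ^ (-a-1) := by
  have h := integral_comp_mul_left_Ioi (g := fun u : ℝ => (1 - Real.exp (-u)) * u ^ (-a-1))
    (a := (0:ℝ)) hc
  rw [mul_zero, smul_eq_mul] at h
  have h2 : ∫ t in Ioi (0:ℝ), (1 - Real.exp (-(c*t))) * t ^ (-a-1)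
      = c^(a+1) * ∫ t in Ioi (0:ℝ), (1 - Real.exp (-(c*t))) * (c*t) ^ (-a-1) := by
    rw [← integral_const_mul]
    refine setIntegral_congr_fun measurableSet_Ioi fun t ht => ?_
    rw [Real.mul_rpow hc.le (le_of_lt ht)]
    have hcc : c ^ (a+1) * c ^ (-a-1) = 1 := by
      rw [← Real.rpow_add hc]; norm_num
    calc (1 - Real.exp (-(c*t))) * t ^ (-a-1)
        = (c ^ (a+1) * c ^ (-a-1)) * ((1 - Real.exp (-(c*t))) * t ^ (-a-1)) := by
          rw [hcc, one_mul]
      _ = c ^ (a+1) * ((1 - Real.exp (-(c*t))) * (c ^ (-a-1) * t ^ (-a-1))) := by ring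
  rw [h2, h, ← mul_assoc]
  congr 1
  rw [← Real.rpow_neg_one c, ← Real.rpow_add hc]
  congr 1; ring

lemma K_pos {a : ℝ} (ha : 0 < a) (ha1 : a < 1) :
    0 < ∫ t in Ioi (0:ℝ), (1 - Real.exp (-t)) * t ^ (-a-1) := by
  have hi : IntegrableOn (fun t : ℝ => (1 - Real.exp (-t)) * t ^ (-a-1)) (Ioi (0:ℝ)) := by
    have := integrableOn_one_sub_exp ha ha1 (c := 1) zero_le_one
    simpa using this
  rw [setIntegral_pos_iff_support_of_nonneg_ae ?_ hi]
  · refine lt_of_lt_of_le ?_ (measure_mono (?_ : Ioi (0:ℝ) ⊆ _))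
    · rw [Real.volume_Ioi]; exact ENNReal.zero_lt_top
    · intro t ht
      refine ⟨?_, ht⟩
      have ht0 : (0:ℝ) < t := ht
      have h1 : 0 < 1 - Real.exp (-t) := by
        have : Real.exp (-t) < 1 := Real.exp_lt_one_iff.mpr (by linarith)
        linarith
      exact ne_of_gt (mul_pos h1 (Real.rpow_pos_of_pos ht0 _))
  · filter_upwards [ae_restrict_mem measurableSet_Ioi] with t ht
    have ht0 : (0:ℝ) < t := ht
    have h1 : 0 ≤ 1 - Real.exp (-t) := by
      have : Real.exp (-t) ≤ 1 := Real.exp_le_one_iff.mpr (by linarith)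
      linarith
    exact mul_nonneg h1 (Real.rpow_nonneg ht0.le _)

lemma rpow_eq_K_integral {a : ℝ} (ha : 0 < a) (ha1 : a < 1) {c : ℝ} (hc : 0 ≤ c) :
    ∫ t in Ioi (0:ℝ), (1 - Real.exp (-(c*t))) * t ^ (-a-1)
      = (∫ t in Ioi (0:ℝ), (1 - Real.exp (-t)) * t ^ (-a-1)) * c ^ a := by
  rcases eq_or_lt_of_le hc with rfl | hc'
  · simp [Real.zero_rpow (ne_of_gt ha)]
  · rw [integral_one_sub_exp_scale ha ha1 hc']; ring

lemma real_rpow_add_le_add_rpow {u v p : ℝ} (hu : 0 ≤ u) (hv : 0 ≤ v)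
    (hp : 0 ≤ p) (hp1 : p ≤ 1) : (u+v)^p ≤ u^p + v^p := by
  lift u to NNReal using hu
  lift v to NNReal using hv
  have := NNReal.rpow_add_le_add_rpow u v hp hp1
  exact_mod_cast this

lemma gaussian_key {n : ℕ} {E : Type*} [NormedAddCommGroup E] [InnerProductSpace ℝ E]
    (lam : Fin n → ℝ) (x : Fin n → E) (hlam : ∀ i, 0 ≤ lam i) {t : ℝ} (ht : 0 ≤ t) :
    ∑ i, ∑ j, lam i * lam j * Real.exp (-((‖x i‖^2 + ‖x j‖^2) * t))
      ≤ ∑ i, ∑ j, lam i * lam j * Real.exp (-(‖x i - x j‖^2 * t)) := by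
  set g : Fin n → ℝ := fun i => lam i * Real.exp (-(‖x i‖^2 * t)) with hg
  have step : ∀ i j, lam i * lam j * Real.exp (-((‖x i‖^2 + ‖x j‖^2) * t))
      + 2*t*(g i * g j * ⟪x i, x j⟫) ≤ lam i * lam j * Real.exp (-(‖x i - x j‖^2 * t)) := by
    intro i j
    have hD : ‖x i - x j‖^2 = ‖x i‖^2 - 2*⟪x i, x j⟫ + ‖x j‖^2 := norm_sub_sq_real (x i) (x j)
    have hE : Real.exp (-(‖x i - x j‖^2 * t))
        = Real.exp (-((‖x i‖^2 + ‖x j‖^2) * t)) * Real.exp (2*⟪x i, x j⟫*t) := by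
      rw [← Real.exp_add]; congr 1; rw [hD]; ring
    have hS : Real.exp (-((‖x i‖^2 + ‖x j‖^2) * t))
        = Real.exp (-(‖x i‖^2 * t)) * Real.exp (-(‖x j‖^2 * t)) := by
      rw [← Real.exp_add]; congr 1; ring
    have h1 : 1 + 2*⟪x i, x j⟫*t ≤ Real.exp (2*⟪x i, x j⟫*t) := by
      have := Real.add_one_le_exp (2*⟪x i, x j⟫*t); linarith
    have h2 : Real.exp (-((‖x i‖^2 + ‖x j‖^2) * t)) * (1 + 2*⟪x i, x j⟫*t)
        ≤ Real.exp (-(‖x i - x j‖^2 * t)) := by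
      rw [hE]
      exact mul_le_mul_of_nonneg_left h1 (Real.exp_nonneg _)
    have h3 : lam i * lam j * (Real.exp (-((‖x i‖^2 + ‖x j‖^2) * t)) * (1 + 2*⟪x i, x j⟫*t))
        ≤ lam i * lam j * Real.exp (-(‖x i - x j‖^2 * t)) :=
      mul_le_mul_of_nonneg_left h2 (mul_nonneg (hlam i) (hlam j))
    refine le_trans (le_of_eq ?_) h3
    rw [hg]; simp only []
    rw [hS]; ring
  calc ∑ i, ∑ j, lam i * lam j * Real.exp (-((‖x i‖^2 + ‖x j‖^2) * t))
      ≤ (∑ i, ∑ j, lam i * lam j * Real.exp (-((‖x i‖^2 + ‖x j‖^2) * t)))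
          + 2*t*‖∑ i, g i • x i‖^2 := by
        have : (0:ℝ) ≤ 2*t*‖∑ i, g i • x i‖^2 := by positivity
        linarith
    _ = ∑ i, ∑ j, (lam i * lam j * Real.exp (-((‖x i‖^2 + ‖x j‖^2) * t))
          + 2*t*(g i * g j * ⟪x i, x j⟫)) := by
        rw [norm_sq_sum_smul, Finset.mul_sum, ← Finset.sum_add_distrib]
        refine Finset.sum_congr rfl fun i _ => ?_
        rw [Finset.mul_sum, ← Finset.sum_add_distrib]
    _ ≤ ∑ i, ∑ j, lam i * lam j * Real.exp (-(‖x i - x j‖^2 * t)) :=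
        Finset.sum_le_sum fun i _ => Finset.sum_le_sum fun j _ => step i j

lemma sum_one_sub_exp_eq {n : ℕ} (lam : Fin n → ℝ) (c : Fin n → Fin n → ℝ) (w t : ℝ) :
    ∑ i, ∑ j, lam i * lam j * ((1 - Real.exp (-(c i j * t))) * w)
      = ((∑ i, ∑ j, lam i * lam j)
          - ∑ i, ∑ j, lam i * lam j * Real.exp (-(c i j * t))) * w := by
  rw [sub_mul, Finset.sum_mul, Finset.sum_mul, ← Finset.sum_sub_distrib]
  refine Finset.sum_congr rfl fun i _ => ?_
  rw [Finset.sum_mul, Finset.sum_mul, ← Finset.sum_sub_distrib]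
  exact Finset.sum_congr rfl fun j _ => by ring

end auxlemmas

theorem gram_integral_and_holder (d n : ℕ) (x : Fin n → EuclideanSpace ℝ (Fin d)) :
    (∀ (β : ℝ) (a : Fin n → ℝ), 0 < β → (∀ i, 0 < a i) →
      0 ≤ (∑ i, ∑ j, ⟪x i, x j⟫ / (a i + a j) ^ β) ∧
        (∑ i, ∑ j, ⟪x i, x j⟫ / (a i + a j) ^ β)
          = (1 / Real.Gamma β) *
              ∫ t in Set.Ioi (0 : ℝ), ‖∑ i, Real.exp (-(a i) * t) • x i‖ ^ 2 * t ^ (β - 1)) ∧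
      ∀ (lam : Fin n → ℝ) (a : ℝ), (∀ i, 0 ≤ lam i) → (∑ i, lam i) = 1 → 0 < a → a ≤ 1 →
        (∑ i, ∑ j, lam i * lam j * ‖x i - x j‖ ^ (2 * a)
            ≤ ∑ i, ∑ j, lam i * lam j * (‖x i‖ ^ 2 + ‖x j‖ ^ 2) ^ a) ∧
          (∑ i, ∑ j, lam i * lam j * (‖x i‖ ^ 2 + ‖x j‖ ^ 2) ^ a)
            ≤ 2 * ∑ i, lam i * ‖x i‖ ^ (2 * a) := by
  constructor
  · -- part (i)
    intro β a hβ ha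
    have hΓ : 0 < Real.Gamma β := Real.Gamma_pos_of_pos hβ
    have hc : ∀ i j : Fin n, 0 < a i + a j := fun i j => by
      have := ha i; have := ha j; linarith
    have hInt : ∀ i j : Fin n, IntegrableOn
        (fun t : ℝ => ⟪x i, x j⟫ * (Real.exp (-((a i + a j)*t)) * t^(β-1))) (Ioi (0:ℝ)) :=
      fun i j => (integrableOn_exp_neg_mul_rpowβ hβ (hc i j)).const_mul _
    have heq : (∫ t in Ioi (0:ℝ), ‖∑ i, Real.exp (-(a i) * t) • x i‖ ^ 2 * t ^ (β - 1))
        = ∑ i, ∑ j, ⟪x i, x j⟫ * (Real.Gamma β / (a i + a j) ^ β) := by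
      have hptw : ∀ t ∈ Ioi (0:ℝ), ‖∑ i, Real.exp (-(a i) * t) • x i‖ ^ 2 * t ^ (β - 1)
          = ∑ i, ∑ j, ⟪x i, x j⟫ * (Real.exp (-((a i + a j)*t)) * t^(β-1)) := by
        intro t ht
        rw [norm_sq_sum_smul, Finset.sum_mul]
        refine Finset.sum_congr rfl fun i _ => ?_
        rw [Finset.sum_mul]
        refine Finset.sum_congr rfl fun j _ => ?_
        have hE : Real.exp (-(a i)*t) * Real.exp (-(a j)*t)
            = Real.exp (-((a i + a j)*t)) := by rw [← Real.exp_add]; congr 1; ring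
        rw [← hE]; ring
      rw [setIntegral_congr_fun measurableSet_Ioi hptw,
        integral_finset_sum _ (fun i _ => integrable_finset_sum _ (fun j _ => hInt i j))]
      refine Finset.sum_congr rfl fun i _ => ?_
      rw [integral_finset_sum _ (fun j _ => hInt i j)]
      refine Finset.sum_congr rfl fun j _ => ?_
      rw [integral_const_mul, integral_exp_neg_mul_rpowβ hβ (hc i j)]
    have hfinal : (∑ i, ∑ j, ⟪x i, x j⟫ / (a i + a j) ^ β)
        = (1 / Real.Gamma β) *
            ∫ t in Set.Ioi (0 : ℝ), ‖∑ i, Real.exp (-(a i) * t) • x i‖ ^ 2 * t ^ (β - 1) := by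
      rw [heq, Finset.mul_sum]
      refine Finset.sum_congr rfl fun i _ => ?_
      rw [Finset.mul_sum]
      refine Finset.sum_congr rfl fun j _ => ?_
      have hp : (0:ℝ) < (a i + a j) ^ β := Real.rpow_pos_of_pos (hc i j) β
      field_simp
    refine ⟨?_, hfinal⟩
    rw [hfinal]
    refine mul_nonneg (by positivity) (setIntegral_nonneg measurableSet_Ioi fun t ht => ?_)
    exact mul_nonneg (by positivity) (Real.rpow_nonneg (le_of_lt ht) _)
  · -- part (ii)
    intro lam a hlam hlam1 ha0 ha1
    have hpow : ∀ y : EuclideanSpace ℝ (Fin d), ‖y‖^(2*a) = (‖y‖^2)^a := by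
      intro y
      rw [show ((2:ℝ)*a) = (((2:ℕ):ℝ))*a by norm_num, Real.rpow_mul (norm_nonneg y),
        Real.rpow_natCast]
    constructor
    · -- first inequality
      simp only [hpow]
      rcases eq_or_lt_of_le ha1 with rfl | hlt
      · -- a = 1
        simp only [Real.rpow_one]
        have hN : ∑ i, ∑ j, lam i * lam j * ‖x i - x j‖^2
            = (∑ i, ∑ j, lam i * lam j * (‖x i‖^2 + ‖x j‖^2)) - 2*‖∑ i, lam i • x i‖^2 := by
          rw [norm_sq_sum_smul, Finset.mul_sum, ← Finset.sum_sub_distrib]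
          refine Finset.sum_congr rfl fun i _ => ?_
          rw [Finset.mul_sum, ← Finset.sum_sub_distrib]
          refine Finset.sum_congr rfl fun j _ => ?_
          have hD := norm_sub_sq_real (x i) (x j)
          rw [hD]; ring
        have := sq_nonneg ‖∑ i, lam i • x i‖
        rw [hN]; nlinarith [sq_nonneg ‖∑ i, lam i • x i‖]
      · -- a < 1
        set K := ∫ t in Ioi (0:ℝ), (1 - Real.exp (-t)) * t ^ (-a-1) with hKdef
        have hKpos : 0 < K := K_pos ha0 hlt
        refine le_of_mul_le_mul_left ?_ hKpos
        have hrw : ∀ f : Fin n → Fin n → ℝ, (∀ i j, 0 ≤ f i j) →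
            K * (∑ i, ∑ j, lam i * lam j * (f i j)^a)
              = ∫ t in Ioi (0:ℝ), ∑ i, ∑ j,
                  lam i * lam j * ((1 - Real.exp (-(f i j * t))) * t^(-a-1)) := by
          intro f hf
          rw [integral_finset_sum _ (fun i _ => integrable_finset_sum _
            (fun j _ => (integrableOn_one_sub_exp ha0 hlt (hf i j)).const_mul _)),
            Finset.mul_sum]
          refine Finset.sum_congr rfl fun i _ => ?_
          rw [integral_finset_sum _ (fun j _ =>
            (integrableOn_one_sub_exp ha0 hlt (hf i j)).const_mul _), Finset.mul_sum]
          refine Finset.sum_congr rfl fun j _ => ?_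
          rw [integral_const_mul, rpow_eq_K_integral ha0 hlt (hf i j), ← hKdef]
          ring
        calc K * (∑ i, ∑ j, lam i * lam j * (‖x i - x j‖^2)^a)
            = ∫ t in Ioi (0:ℝ), ∑ i, ∑ j,
                lam i * lam j * ((1 - Real.exp (-(‖x i - x j‖^2 * t))) * t^(-a-1)) :=
              hrw _ (fun i j => by positivity)
          _ ≤ ∫ t in Ioi (0:ℝ), ∑ i, ∑ j,
                lam i * lam j * ((1 - Real.exp (-((‖x i‖^2 + ‖x j‖^2) * t))) * t^(-a-1)) := by
              refine setIntegral_mono_on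
                (integrable_finset_sum _ (fun i _ => integrable_finset_sum _
                  (fun j _ => (integrableOn_one_sub_exp ha0 hlt
                    (show (0:ℝ) ≤ ‖x i - x j‖^2 by positivity)).const_mul _)))
                (integrable_finset_sum _ (fun i _ => integrable_finset_sum _
                  (fun j _ => (integrableOn_one_sub_exp ha0 hlt
                    (show (0:ℝ) ≤ ‖x i‖^2 + ‖x j‖^2 by positivity)).const_mul _)))
                measurableSet_Ioi ?_
              intro t ht
              have ht0 : (0:ℝ) < t := ht
              have hts : 0 ≤ t ^ (-a-1) := Real.rpow_nonneg ht0.le _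
              have key := gaussian_key lam x hlam ht0.le
              calc ∑ i, ∑ j, lam i * lam j * ((1 - Real.exp (-(‖x i - x j‖^2 * t))) * t^(-a-1))
                  = ((∑ i, ∑ j, lam i * lam j)
                      - ∑ i, ∑ j, lam i * lam j * Real.exp (-(‖x i - x j‖^2 * t))) * t^(-a-1) :=
                    sum_one_sub_exp_eq lam (fun i j => ‖x i - x j‖^2) _ t
                _ ≤ ((∑ i, ∑ j, lam i * lam j)
                      - ∑ i, ∑ j, lam i * lam j
                          * Real.exp (-((‖x i‖^2 + ‖x j‖^2) * t))) * t^(-a-1) :=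
                    mul_le_mul_of_nonneg_right (sub_le_sub_left key _) hts
                _ = ∑ i, ∑ j, lam i * lam j
                      * ((1 - Real.exp (-((‖x i‖^2 + ‖x j‖^2) * t))) * t^(-a-1)) :=
                    (sum_one_sub_exp_eq lam (fun i j => ‖x i‖^2 + ‖x j‖^2) _ t).symm
          _ = K * (∑ i, ∑ j, lam i * lam j * (‖x i‖^2 + ‖x j‖^2)^a) :=
              (hrw _ (fun i j => by positivity)).symm
    · -- second inequality
      have hsub : ∀ i j : Fin n, (‖x i‖^2 + ‖x j‖^2)^a ≤ (‖x i‖^2)^a + (‖x j‖^2)^a :=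
        fun i j => real_rpow_add_le_add_rpow (by positivity) (by positivity) ha0.le ha1
      calc ∑ i, ∑ j, lam i * lam j * (‖x i‖ ^ 2 + ‖x j‖ ^ 2) ^ a
          ≤ ∑ i, ∑ j, lam i * lam j * ((‖x i‖^2)^a + (‖x j‖^2)^a) :=
            Finset.sum_le_sum fun i _ => Finset.sum_le_sum fun j _ =>
              mul_le_mul_of_nonneg_left (hsub i j) (mul_nonneg (hlam i) (hlam j))
        _ = 2 * ∑ i, lam i * ‖x i‖ ^ (2 * a) := by
            simp only [hpow]
            have h1 : ∀ i : Fin n, ∑ j, lam i * lam j * ((‖x i‖^2)^a + (‖x j‖^2)^a)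
                = lam i * (‖x i‖^2)^a + lam i * (∑ j, lam j * (‖x j‖^2)^a) := by
              intro i
              have : ∑ j, lam i * lam j * ((‖x i‖^2)^a + (‖x j‖^2)^a)
                  = (lam i * (‖x i‖^2)^a) * (∑ j, lam j)
                    + lam i * (∑ j, lam j * (‖x j‖^2)^a) := by
                rw [Finset.mul_sum, Finset.mul_sum, ← Finset.sum_add_distrib]
                exact Finset.sum_congr rfl fun j _ => by ring
              rw [this, hlam1, mul_one]
            simp only [h1]
            rw [Finset.sum_add_distrib, ← Finset.sum_mul, hlam1, one_mul]
            ring
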